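/- For every nonnegative integer l, ⟨vp(1/x), h_{2l}⟩ = 0 and ⟨vp(1/x), h_{2l+1}⟩ = 2π^{1/4} (2l+1)!^{1/2} Σ_{m=0}^{l} (1/(m!(l-m)!(2l-2m+1))) · (-1)^m/2^m. -/

import Mathlib

open MeasureTheory Filter

/-- The `k`-th Hermite function
`h_k(t) = ((-1)^k/(π^{1/4} 2^{k/2} (k!)^{1/2})) e^{t²/2} (d/dt)^k e^{-t²}`. -/
noncomputable def hermiteFun (k : ℕ) (t : ℝ) : ℝ :=
  ((-1 : ℝ) ^ k /
      (Real.pi ^ ((1 : ℝ) / 4) * (2 : ℝ) ^ ((k : ℝ) / 2) *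
        Real.sqrt (Nat.factorial k))) *
    Real.exp (t ^ 2 / 2) * iteratedDeriv k (fun s : ℝ => Real.exp (-s ^ 2)) t

open scoped Nat

lemma two_rpow_half_pow (k : ℕ) : (2 : ℝ) ^ ((k : ℝ) / 2) = Real.sqrt 2 ^ k := by
  rw [Real.sqrt_eq_rpow, ← Real.rpow_natCast ((2:ℝ) ^ ((1:ℝ)/2)) k,
    ← Real.rpow_mul (by norm_num : (0:ℝ) ≤ 2)]
  ring_nf

lemma hermiteFun_eq (k : ℕ) (x : ℝ) :
    hermiteFun k x = Polynomial.aeval (Real.sqrt 2 * x) (Polynomial.hermite k) *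
      Real.exp (-(x ^ 2 / 2)) /
      (Real.pi ^ ((1 : ℝ) / 4) * Real.sqrt (Nat.factorial k)) := by
  have hcd : ContDiff ℝ k (fun y : ℝ => Real.exp (-(y ^ 2 / 2))) :=
    (Real.contDiff_exp.comp (((contDiff_id.pow 2).div_const 2).neg)).of_le le_top
  have h1 : (fun s : ℝ => Real.exp (-s ^ 2)) =
      fun s : ℝ => (fun y : ℝ => Real.exp (-(y ^ 2 / 2))) (Real.sqrt 2 * s) := by
    funext s
    have : Real.sqrt 2 ^ 2 = 2 := Real.sq_sqrt (by norm_num)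
    simp only [mul_pow, this]
    ring_nf
  have h2 : iteratedDeriv k (fun s : ℝ => Real.exp (-s ^ 2)) x
      = Real.sqrt 2 ^ k * ((-1 : ℝ) ^ k *
        Polynomial.aeval (Real.sqrt 2 * x) (Polynomial.hermite k) *
        Real.exp (-((Real.sqrt 2 * x) ^ 2 / 2))) := by
    rw [h1, iteratedDeriv_comp_const_mul hcd]
    beta_reduce
    rw [iteratedDeriv_eq_iterate, Polynomial.deriv_gaussian_eq_hermite_mul_gaussian]
  have h3 : Real.exp (-((Real.sqrt 2 * x) ^ 2 / 2)) = Real.exp (-x ^ 2) := by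
    have : Real.sqrt 2 ^ 2 = 2 := Real.sq_sqrt (by norm_num)
    simp only [mul_pow, this]
    ring_nf
  have h4 : Real.exp (x ^ 2 / 2) * Real.exp (-x ^ 2) = Real.exp (-(x ^ 2 / 2)) := by
    rw [← Real.exp_add]; ring_nf
  have hs2 : (0:ℝ) < Real.sqrt 2 ^ k := pow_pos (Real.sqrt_pos.2 (by norm_num)) k
  have hpi : (0:ℝ) < Real.pi ^ ((1:ℝ)/4) := Real.rpow_pos_of_pos Real.pi_pos _
  have hfac : (0:ℝ) < Real.sqrt (Nat.factorial k) := Real.sqrt_pos.2 (by positivity)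
  rw [hermiteFun, h2, h3, two_rpow_half_pow, ← h4]
  field_simp
  ring_nf
  rw [show ((-1:ℝ))^(k*2) = 1 from Even.neg_one_pow ⟨k, by ring⟩]
  ring

lemma hermiteFun_even (l : ℕ) (x : ℝ) : hermiteFun (2 * l) (-x) = hermiteFun (2 * l) x := by
  have hg : (fun s : ℝ => Real.exp (-s ^ 2)) ∘ Neg.neg = fun s : ℝ => Real.exp (-s ^ 2) := by
    funext s; simp [neg_pow]
  have h := iteratedDeriv_comp_neg (2 * l) (fun s : ℝ => Real.exp (-s ^ 2)) x
  rw [show (fun x : ℝ => (fun s : ℝ => Real.exp (-s ^ 2)) (-x)) =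
      (fun s : ℝ => Real.exp (-s ^ 2)) by funext s; simp] at h
  rw [hermiteFun, hermiteFun, neg_pow, h]
  simp [Even.neg_one_pow (⟨l, by ring⟩ : Even (2 * l))]

lemma part1 (l : ℕ) (ε : ℝ) :
    ∫ x in {x : ℝ | ε < |x|}, hermiteFun (2 * l) x / x = 0 := by
  set f : ℝ → ℝ := fun x => hermiteFun (2 * l) x / x with hf
  set A : Set ℝ := {x : ℝ | ε < |x|} with hA
  have hAmeas : MeasurableSet A := by
    have : A = abs ⁻¹' Set.Ioi ε := rfl
    rw [this]
    exact (continuous_abs.measurable) measurableSet_Ioi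
  have hodd : ∀ x, A.indicator f (-x) = - A.indicator f x := by
    intro x
    have hmem : -x ∈ A ↔ x ∈ A := by simp [hA]
    by_cases hx : x ∈ A
    · rw [Set.indicator_of_mem hx, Set.indicator_of_mem (hmem.2 hx), hf]
      simp only [hermiteFun_even, div_neg]
    · rw [Set.indicator_of_notMem hx, Set.indicator_of_notMem (fun h => hx (hmem.1 h)), neg_zero]
  have h1 : ∫ x, A.indicator f x = ∫ x, A.indicator f (-x) :=
    (MeasureTheory.integral_neg_eq_self (A.indicator f) volume).symm
  have h2 : ∫ x, A.indicator f x = - ∫ x, A.indicator f x := by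
    nth_rewrite 1 [h1]
    simp_rw [hodd]
    exact integral_neg _
  have h3 : ∫ x, A.indicator f x = 0 := by linarith
  rw [← MeasureTheory.integral_indicator hAmeas, h3]

lemma gamma_half (j : ℕ) :
    Real.Gamma ((j : ℝ) + 1 / 2) =
      Real.sqrt Real.pi * (Nat.factorial (2 * j)) / (4 ^ j * Nat.factorial j) := by
  induction j with
  | zero =>
    norm_num
    rw [Real.Gamma_one_half_eq]
  | succ j ih =>
    have h0 : ((j : ℝ) + 1) + 1 / 2 = ((j : ℝ) + 1 / 2) + 1 := by ring
    have hne : (j : ℝ) + 1 / 2 ≠ 0 := by positivity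
    have h1 : Real.Gamma (((j : ℕ) + 1 : ℕ) + 1 / 2) = ((j : ℝ) + 1 / 2) * Real.Gamma ((j : ℝ) + 1 / 2) := by
      push_cast
      rw [h0, Real.Gamma_add_one hne]
    rw [h1, ih]
    have hfact : (Nat.factorial (2 * (j + 1)) : ℝ) =
        (2 * j + 2) * (2 * j + 1) * Nat.factorial (2 * j) := by
      have : 2 * (j + 1) = (2 * j + 1) + 1 := by ring
      rw [this, Nat.factorial_succ, Nat.factorial_succ]
      push_cast; ring
    have hfact2 : (Nat.factorial (j + 1) : ℝ) = (j + 1) * Nat.factorial j := by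
      rw [Nat.factorial_succ]; push_cast; ring
    rw [hfact, hfact2]
    have hj : (Nat.factorial j : ℝ) ≠ 0 := by positivity
    have h4 : ((4 : ℝ)) ^ (j + 1) = 4 * 4 ^ j := by ring
    rw [h4]
    field_simp
    ring

lemma cast_nonneg_aux (j : ℕ) : (-1 : ℝ) < ((2 * j : ℕ) : ℝ) := by
  have : (0:ℝ) ≤ ((2 * j : ℕ) : ℝ) := Nat.cast_nonneg _
  linarith

lemma integrable_moment (j : ℕ) :
    Integrable (fun x : ℝ => x ^ (2 * j) * Real.exp (-(x ^ 2 / 2))) := by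
  have h := integrable_rpow_mul_exp_neg_mul_sq (b := 1 / 2) (by norm_num)
    (s := ((2 * j : ℕ) : ℝ)) (cast_nonneg_aux j)
  refine h.congr (Filter.Eventually.of_forall fun x => ?_)
  show x ^ ((2 * j : ℕ) : ℝ) * Real.exp (-(1/2) * x ^ 2) = x ^ (2 * j) * Real.exp (-(x ^ 2 / 2))
  rw [Real.rpow_natCast, show -(1/2 : ℝ) * x ^ 2 = -(x ^ 2 / 2) by ring]

lemma moment (j : ℕ) :
    ∫ x : ℝ, x ^ (2 * j) * Real.exp (-(x ^ 2 / 2)) =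
      Real.sqrt 2 * Real.sqrt Real.pi * (Nat.factorial (2 * j)) / (2 ^ j * Nat.factorial j) := by
  have h1 : (fun x : ℝ => x ^ (2 * j) * Real.exp (-(x ^ 2 / 2))) =
      fun x : ℝ => (fun t : ℝ => t ^ (2 * j) * Real.exp (-(t ^ 2 / 2))) |x| := by
    funext x
    simp only []
    rw [Even.pow_abs ⟨j, by ring⟩, sq_abs]
  have h2 := integral_comp_abs (f := fun t : ℝ => t ^ (2 * j) * Real.exp (-(t ^ 2 / 2)))
  have h3 : (∫ x in Set.Ioi (0:ℝ), x ^ (2 * j) * Real.exp (-(x ^ 2 / 2))) =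
      ∫ x in Set.Ioi (0:ℝ), x ^ ((2 * j : ℕ) : ℝ) * Real.exp (-(1/2) * x ^ (2:ℝ)) := by
    refine setIntegral_congr_fun measurableSet_Ioi (fun x hx => ?_)
    rw [Real.rpow_natCast, Real.rpow_two]
    ring_nf
  have h4 := integral_rpow_mul_exp_neg_mul_rpow (p := 2) (q := ((2 * j : ℕ) : ℝ))
    (b := 1/2) (by norm_num) (cast_nonneg_aux j) (by norm_num)
  have harg : (((2 * j : ℕ) : ℝ) + 1) / 2 = (j : ℝ) + 1 / 2 := by push_cast; ring
  have hrpow : ((1:ℝ)/2) ^ (-(((2 * j : ℕ) : ℝ) + 1) / 2) = 2 ^ j * Real.sqrt 2 := by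
    rw [one_div, Real.inv_rpow (by norm_num), ← Real.rpow_neg (by norm_num), neg_div, neg_neg,
      harg, Real.rpow_add (by norm_num), Real.rpow_natCast, Real.sqrt_eq_rpow]
  rw [h1, h2, h3, h4, hrpow, harg, gamma_half]
  have h4j : ((4:ℝ)) ^ j = 2 ^ j * 2 ^ j := by rw [← mul_pow]; norm_num
  rw [h4j]
  have hj : (Nat.factorial j : ℝ) ≠ 0 := by positivity
  have h2j : ((2:ℝ)) ^ j ≠ 0 := by positivity
  field_simp

lemma fact_dbl (m : ℕ) : Nat.factorial (2 * m) = 2 ^ m * Nat.factorial m * (2 * m - 1)‼ := by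
  cases m with
  | zero => simp
  | succ m =>
    have h1 : 2 * (m + 1) = (2 * m + 1) + 1 := by ring
    rw [h1, Nat.factorial_eq_mul_doubleFactorial]
    have h2 : 2 * m + 1 + 1 = 2 * (m + 1) := by ring
    have h3 : 2 * m + 1 + 1 - 1 = 2 * m + 1 := by omega
    rw [h3, h2, Nat.doubleFactorial_two_mul]

lemma nat_key (m j : ℕ) :
    (2 * m - 1)‼ * Nat.choose (2 * m + (2 * j + 1)) (2 * j + 1) *
      Nat.factorial (2 * j + 1) * (2 ^ m * Nat.factorial m) =
      Nat.factorial (2 * m + (2 * j + 1)) := by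
  have h := Nat.choose_mul_factorial_mul_factorial
    (show 2 * j + 1 ≤ 2 * m + (2 * j + 1) by omega)
  have h2 : 2 * m + (2 * j + 1) - (2 * j + 1) = 2 * m := by omega
  rw [h2] at h
  rw [← h, fact_dbl]
  ring

lemma sum_range_even_zero (N : ℕ) (f : ℕ → ℝ) (h : ∀ i, f (2 * i) = 0) :
    ∑ i ∈ Finset.range (2 * N), f i = ∑ j ∈ Finset.range N, f (2 * j + 1) := by
  induction N with
  | zero => simp
  | succ N ih =>
    have h1 : 2 * (N + 1) = (2 * N + 1) + 1 := by ring
    rw [h1, Finset.sum_range_succ, Finset.sum_range_succ, ih, h N, Finset.sum_range_succ]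
    ring

lemma aeval_hermite_odd (l : ℕ) (y : ℝ) :
    Polynomial.aeval y (Polynomial.hermite (2 * l + 1)) =
      ∑ j ∈ Finset.range (l + 1),
        ((Polynomial.hermite (2 * l + 1)).coeff (2 * j + 1) : ℝ) * y ^ (2 * j + 1) := by
  rw [Polynomial.aeval_eq_sum_range (R := ℤ)]
  rw [Polynomial.natDegree_hermite]
  have h1 : 2 * l + 1 + 1 = 2 * (l + 1) := by ring
  rw [h1, sum_range_even_zero]
  · exact Finset.sum_congr rfl fun j _ => by rw [zsmul_eq_mul]
  · intro i
    have hodd : Odd (2 * l + 1 + 2 * i) := ⟨l + i, by ring⟩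
    rw [Polynomial.coeff_hermite_of_odd_add hodd]
    simp

noncomputable def Gfun (l : ℕ) : ℝ → ℝ := fun x =>
  ∑ j ∈ Finset.range (l + 1),
    (((Polynomial.hermite (2 * l + 1)).coeff (2 * j + 1) : ℝ) * Real.sqrt 2 ^ (2 * j + 1) /
      (Real.pi ^ ((1 : ℝ) / 4) * Real.sqrt (Nat.factorial (2 * l + 1)))) *
    (x ^ (2 * j) * Real.exp (-(x ^ 2 / 2)))

lemma G_eq (l : ℕ) {x : ℝ} (hx : x ≠ 0) : hermiteFun (2 * l + 1) x / x = Gfun l x := by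
  rw [hermiteFun_eq, aeval_hermite_odd, Gfun]
  rw [Finset.sum_mul, Finset.sum_div, Finset.sum_div]
  refine Finset.sum_congr rfl fun j _ => ?_
  have hD : Real.pi ^ ((1 : ℝ) / 4) * Real.sqrt (Nat.factorial (2 * l + 1)) ≠ 0 := by
    have h1 : (0:ℝ) < Real.pi ^ ((1:ℝ)/4) := Real.rpow_pos_of_pos Real.pi_pos _
    have h2 : (0:ℝ) < Real.sqrt (Nat.factorial (2 * l + 1)) := Real.sqrt_pos.2 (by positivity)
    positivity
  rw [mul_pow]
  field_simp
  ring

lemma G_integrable (l : ℕ) : Integrable (Gfun l) := by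
  apply MeasureTheory.integrable_finset_sum
  intro j _
  exact (integrable_moment j).const_mul _

lemma G_integral (l : ℕ) : ∫ x : ℝ, Gfun l x =
    ∑ j ∈ Finset.range (l + 1),
      (((Polynomial.hermite (2 * l + 1)).coeff (2 * j + 1) : ℝ) * Real.sqrt 2 ^ (2 * j + 1) /
        (Real.pi ^ ((1 : ℝ) / 4) * Real.sqrt (Nat.factorial (2 * l + 1)))) *
      (Real.sqrt 2 * Real.sqrt Real.pi * (Nat.factorial (2 * j)) / (2 ^ j * Nat.factorial j)) := by
  simp only [Gfun]
  rw [MeasureTheory.integral_finset_sum _ (fun j _ => (integrable_moment j).const_mul _)]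
  exact Finset.sum_congr rfl fun j _ => by rw [integral_const_mul, moment]

lemma sum_eq (l : ℕ) :
    ∑ j ∈ Finset.range (l + 1),
      (((Polynomial.hermite (2 * l + 1)).coeff (2 * j + 1) : ℝ) * Real.sqrt 2 ^ (2 * j + 1) /
        (Real.pi ^ ((1 : ℝ) / 4) * Real.sqrt (Nat.factorial (2 * l + 1)))) *
      (Real.sqrt 2 * Real.sqrt Real.pi * (Nat.factorial (2 * j)) / (2 ^ j * Nat.factorial j)) =
    2 * Real.pi ^ ((1 : ℝ) / 4) * Real.sqrt (Nat.factorial (2 * l + 1)) *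
        ∑ m ∈ Finset.range (l + 1),
          1 / ((Nat.factorial m : ℝ) * (Nat.factorial (l - m) : ℝ) *
              (2 * l - 2 * m + 1 : ℝ)) *
            ((-1 : ℝ) ^ m / 2 ^ m) := by
  rw [Finset.mul_sum, ← Finset.sum_range_reflect]
  refine Finset.sum_congr rfl fun j hj => ?_
  have hjl : j ≤ l := by
    have := Finset.mem_range.1 hj; omega
  have hidx : l + 1 - 1 - j = l - j := by omega
  rw [hidx]
  set m := l - j with hm
  have hlmj : l - m = j := by omega
  have hco : ((Polynomial.hermite (2 * l + 1)).coeff (2 * m + 1) : ℝ) =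
      (-1 : ℝ) ^ j * ((2 * j - 1)‼ : ℝ) * (Nat.choose (2 * l + 1) (2 * m + 1) : ℝ) := by
    have h := Polynomial.coeff_hermite_explicit j (2 * m + 1)
    rw [show 2 * j + (2 * m + 1) = 2 * l + 1 by omega] at h
    rw [h]; push_cast; ring
  have hkey : ((2 * j - 1)‼ : ℝ) * (Nat.choose (2 * l + 1) (2 * m + 1) : ℝ) *
      (Nat.factorial (2 * m + 1) : ℝ) * (2 ^ j * (Nat.factorial j : ℝ)) =
      (Nat.factorial (2 * l + 1) : ℝ) := by
    have h := nat_key j m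
    rw [show 2 * j + (2 * m + 1) = 2 * l + 1 by omega] at h
    exact_mod_cast h
  have hfac21 : ((2 * m + 1 : ℕ).factorial : ℝ) = (2 * (m:ℝ) + 1) * ((2 * m : ℕ).factorial : ℝ) := by
    rw [Nat.factorial_succ]; push_cast; ring
  have hs : Real.sqrt (Nat.factorial (2 * l + 1)) * Real.sqrt (Nat.factorial (2 * l + 1)) =
      (Nat.factorial (2 * l + 1) : ℝ) := Real.mul_self_sqrt (Nat.cast_nonneg _)
  have hp2 : Real.pi ^ ((1:ℝ)/4) * Real.pi ^ ((1:ℝ)/4) = Real.sqrt Real.pi := by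
    rw [← Real.rpow_add Real.pi_pos, show (1:ℝ)/4 + 1/4 = 1/2 by norm_num,
      ← Real.sqrt_eq_rpow]
  have hr1 : Real.sqrt 2 ^ (2 * m + 1) = 2 ^ m * Real.sqrt 2 := by
    rw [pow_succ, pow_mul, Real.sq_sqrt (by norm_num : (0:ℝ) ≤ 2)]
  have hr2 : Real.sqrt 2 * Real.sqrt 2 = 2 := Real.mul_self_sqrt (by norm_num)
  have hfacm : (Nat.factorial (l - j) : ℝ) = (Nat.factorial m : ℝ) := by rw [← hm]
  have hlin : (2 * (l:ℝ) - 2 * (j:ℝ) + 1) = 2 * (m:ℝ) + 1 := by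
    have : ((m:ℕ) : ℝ) = (l : ℝ) - (j : ℝ) := by
      rw [hm, Nat.cast_sub hjl]
    rw [this]; ring
  rw [hco, hr1, hfacm, hlin, ← hp2]
  have hppos : (0:ℝ) < Real.pi ^ ((1:ℝ)/4) := Real.rpow_pos_of_pos Real.pi_pos _
  have hspos : (0:ℝ) < Real.sqrt (Nat.factorial (2*l+1)) := Real.sqrt_pos.2 (by positivity)
  have hmf : (Nat.factorial m : ℝ) ≠ 0 := by positivity
  have hjf : (Nat.factorial j : ℝ) ≠ 0 := by positivity
  have h2m1 : (2*(m:ℝ)+1) ≠ 0 := by positivity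
  field_simp
  linear_combination
    (((2*j-1)‼ : ℝ) * (((2*l+1).choose (2*m+1)) : ℝ) * (((2*m : ℕ).factorial) : ℝ) *
        ((Nat.factorial j) : ℝ) * (2*(m:ℝ)+1) * 2^j) * hr2
      - 2 * hs + 2 * hkey
      - (2 * ((2*j-1)‼ : ℝ) * (((2*l+1).choose (2*m+1)) : ℝ) * 2^j * ((Nat.factorial j) : ℝ)) * hfac21

lemma hermiteFun_continuous (k : ℕ) : Continuous (hermiteFun k) := by
  have h : hermiteFun k = fun x =>
      Polynomial.aeval (Real.sqrt 2 * x) (Polynomial.hermite k) * Real.exp (-(x ^ 2 / 2)) /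
        (Real.pi ^ ((1 : ℝ) / 4) * Real.sqrt (Nat.factorial k)) :=
    funext (hermiteFun_eq k)
  rw [h]
  apply Continuous.div_const
  apply Continuous.mul
  · exact (Polynomial.hermite k).continuous_aeval.comp (continuous_const.mul continuous_id)
  · exact Real.continuous_exp.comp (((continuous_id.pow 2).div_const 2).neg)

lemma part2 (l : ℕ) :
    Tendsto (fun ε : ℝ => ∫ x in {x : ℝ | ε < |x|}, hermiteFun (2 * l + 1) x / x)
      (nhdsWithin 0 (Set.Ioi 0)) (nhds (∫ x : ℝ, Gfun l x)) := by
  set g : ℝ → ℝ := fun x => hermiteFun (2 * l + 1) x / x with hg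
  have hmeasset : ∀ ε : ℝ, MeasurableSet {x : ℝ | ε < |x|} := fun ε =>
    continuous_abs.measurable measurableSet_Ioi
  have hgmeas : Measurable g :=
    (hermiteFun_continuous (2 * l + 1)).measurable.div measurable_id
  have h0 : ∀ᵐ x : ℝ ∂volume, x ≠ 0 := compl_mem_ae_iff.mpr (measure_singleton 0)
  have hrw : (fun ε : ℝ => ∫ x in {x : ℝ | ε < |x|}, g x) =
      fun ε : ℝ => ∫ x, ({x : ℝ | ε < |x|}).indicator g x := by
    funext ε
    rw [MeasureTheory.integral_indicator (hmeasset ε)]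
  rw [hrw]
  apply MeasureTheory.tendsto_integral_filter_of_dominated_convergence
    (bound := fun x => ‖Gfun l x‖)
  · exact Eventually.of_forall fun ε =>
      (hgmeas.indicator (hmeasset ε)).aestronglyMeasurable
  · refine Eventually.of_forall fun ε => ?_
    filter_upwards [h0] with x hx
    calc ‖({x : ℝ | ε < |x|}).indicator g x‖ ≤ ‖g x‖ := norm_indicator_le_norm_self g x
    _ = ‖Gfun l x‖ := by rw [hg]; simp only []; rw [G_eq l hx]
  · exact (G_integrable l).norm
  · filter_upwards [h0] with x hx
    have hev : ∀ᶠ ε in nhdsWithin 0 (Set.Ioi 0), ε < |x| := by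
      apply mem_nhdsWithin_of_mem_nhds
      exact Iio_mem_nhds (abs_pos.2 hx)
    have hev2 : ∀ᶠ ε in nhdsWithin 0 (Set.Ioi 0),
        ({x : ℝ | ε < |x|}).indicator g x = Gfun l x := by
      filter_upwards [hev] with ε hε
      rw [Set.indicator_of_mem (by exact hε) g, hg]
      simp only []
      rw [G_eq l hx]
    exact Tendsto.congr' (hev2.mono fun ε h => h.symm) tendsto_const_nhds

/-- `⟨vp(1/x), h_{2l}⟩ = 0` and
`⟨vp(1/x), h_{2l+1}⟩ = 2π^{1/4} (2l+1)!^{1/2} Σ_{m=0}^{l} (-1)^m/(m!(l-m)!(2l-2m+1) 2^m)`. -/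
theorem pv_pairing_hermiteFun (l : ℕ) :
    Tendsto (fun ε : ℝ => ∫ x in {x : ℝ | ε < |x|}, hermiteFun (2 * l) x / x)
      (nhdsWithin 0 (Set.Ioi 0)) (nhds 0) ∧
    Tendsto (fun ε : ℝ => ∫ x in {x : ℝ | ε < |x|}, hermiteFun (2 * l + 1) x / x)
      (nhdsWithin 0 (Set.Ioi 0))
      (nhds (2 * Real.pi ^ ((1 : ℝ) / 4) * Real.sqrt (Nat.factorial (2 * l + 1)) *
        ∑ m ∈ Finset.range (l + 1),
          1 / ((Nat.factorial m : ℝ) * (Nat.factorial (l - m) : ℝ) *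
              (2 * l - 2 * m + 1 : ℝ)) *
            ((-1 : ℝ) ^ m / 2 ^ m))) := by
  constructor
  · have h : (fun ε : ℝ => ∫ x in {x : ℝ | ε < |x|}, hermiteFun (2 * l) x / x) =
        fun _ : ℝ => (0 : ℝ) := funext fun ε => part1 l ε
    rw [h]
    exact tendsto_const_nhds
  · have h := part2 l
    rwa [G_integral, sum_eq] at h
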